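/- arXiv:2005.10512 — 5 statements merged into one kernel-verified Lean document; each statement's English description precedes it below -/
import Mathlib

section
/- Let G be a group with an involutive automorphism σ (playing the role of complex conjugation), let X be a G-set with a compatible involution σ on X (i.e., σ(g·x) = σ(g)·σ(x)), and let x ∈ X be fixed by σ. Let Gₓ be the stabilizer of x. Define φ̃ on {g·x : g ∈ G, σ(g·x) = g·x} by φ̃(g·x) = [g⁻¹·σ(g)], with values in the set of cocycles {s ∈ Gₓ : s·σ(s) = 1} modulo s₁ ~ s₂ iff s₁ = t⁻¹·s₂·σ(t) for t ∈ Gₓ. Then φ̃ is well defined: if g·x is fixed by σ then g⁻¹σ(g) ∈ Gₓ and is a cocycle, and the class does not depend on the choice of g with g·x given. -/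
/-- Well-definedness of the Galois cocycle map `φ̃(g·x) = [g⁻¹·σ(g)]`: if `g·x` is fixed
by the involution then `g⁻¹σ(g)` lies in the stabilizer of `x` and is a cocycle, and its
cohomology class does not depend on the choice of `g` giving the same point `g·x`. -/
theorem stmt8 {G X : Type*} [Group G] [MulAction G X]
    (σG : G →* G) (hσG : ∀ g, σG (σG g) = g)
    (σX : X → X) (hσX : ∀ u, σX (σX u) = u)
    (hcomp : ∀ (g : G) (u : X), σX (g • u) = σG g • σX u)
    (x : X) (hx : σX x = x) :
    (∀ g : G, σX (g • x) = g • x →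
      g⁻¹ * σG g ∈ MulAction.stabilizer G x ∧
      (g⁻¹ * σG g) * σG (g⁻¹ * σG g) = 1) ∧
    (∀ g g' : G, σX (g • x) = g • x → σX (g' • x) = g' • x → g • x = g' • x →
      ∃ t ∈ MulAction.stabilizer G x, g⁻¹ * σG g = t⁻¹ * (g'⁻¹ * σG g') * σG t) := by
  constructor
  · intro g hg
    constructor
    · have h := hcomp g x
      rw [hg, hx] at h
      simp [MulAction.mem_stabilizer_iff, mul_smul, ← h]
    · simp [mul_assoc, hσG]
  · intro g g' hg hg' hgg'
    refine ⟨g'⁻¹ * g, ?_, ?_⟩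
    · simp [MulAction.mem_stabilizer_iff, mul_smul, hgg']
    · simp [mul_assoc]
end

section
/- Suppose a group G with involution σ acts on a set X with a compatible involution σ, and the center Z(G) acts trivially on X. Let x ∈ X with stabilizer exactly Z(G), and suppose there exists h ∈ G with x = h·σ(x). Then h·σ(h) ∈ Z(G), and the maps θ(g) = h·σ(g)·h⁻¹ on G and s(u) = h·σ(u) on X are involutions satisfying the compatibility θ(g)·s(u) = s(g·u), and x is fixed by s. -/
/-- Algebraic core of the lifting theorem for neat real points: if the center acts
trivially, the stabilizer of `x` is exactly the center, and `x = h·σ(x)`, then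
`h·σ(h)` is central, `θ(g) = h·σ(g)·h⁻¹` and `s(u) = h·σ(u)` are involutions, they
are compatible, and `x` is fixed by `s`. -/
theorem stmt12 {G X : Type*} [Group G] [MulAction G X]
    (σG : G →* G) (hσG : ∀ g, σG (σG g) = g)
    (σX : X → X) (hσX : ∀ u, σX (σX u) = u)
    (hcomp : ∀ (g : G) (u : X), σX (g • u) = σG g • σX u)
    (hcenter : ∀ z ∈ Subgroup.center G, ∀ u : X, z • u = u)
    (x : X) (hstab : MulAction.stabilizer G x = Subgroup.center G)
    (h : G) (hx : x = h • σX x) :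
    h * σG h ∈ Subgroup.center G ∧
    (∀ g : G, h * σG (h * σG g * h⁻¹) * h⁻¹ = g) ∧
    (∀ u : X, h • σX (h • σX u) = u) ∧
    (∀ (g : G) (u : X), (h * σG g * h⁻¹) • (h • σX u) = h • σX (g • u)) ∧
    h • σX x = x := by
  have hσx : σX x = σG h • x := by
    conv_lhs => rw [hx]
    rw [hcomp, hσX]
  have hc : h * σG h ∈ Subgroup.center G := by
    rw [← hstab]
    have : (h * σG h) • x = x := by
      rw [mul_smul, ← hσx, ← hx]
    exact this
  have hinvX : ∀ u : X, h • σX (h • σX u) = u := by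
    intro u
    rw [hcomp, hσX, ← mul_smul]
    exact hcenter _ hc u
  refine ⟨hc, ?_, hinvX, ?_, hx.symm⟩
  · intro g
    have hcomm := (Subgroup.mem_center_iff.mp hc) g
    simp only [map_mul, map_inv, hσG]
    calc h * (σG h * g * (σG h)⁻¹) * h⁻¹
        = (h * σG h) * g * (h * σG h)⁻¹ := by group
      _ = g * (h * σG h) * (h * σG h)⁻¹ := by rw [← hcomm]
      _ = g := by group
  · intro g u
    simp [hcomp, mul_smul]
end

section
/- Let f: ℂ → ℝ be defined by f(z) = |z|⁴ − 8·Re(z³) + 18·|z|² − 27. If z = a + b + c where a, b, c are complex numbers of modulus 1 with a·b·c = 1 (i.e., z is the trace of a matrix in SU(3)), then f(z) ≤ 0. -/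
/-- Goldman's function `f(z) = |z|⁴ - 8·Re(z³) + 18·|z|² - 27` is nonpositive on traces
of matrices in `SU(3)`: if `z = a + b + c` with `|a| = |b| = |c| = 1` and `abc = 1`,
then `f(z) ≤ 0`. -/
theorem stmt14 (a b c : ℂ) (ha : ‖a‖ = 1) (hb : ‖b‖ = 1)
    (hc : ‖c‖ = 1) (habc : a * b * c = 1) :
    ‖a + b + c‖ ^ 4 - 8 * (((a + b + c) ^ 3).re)
      + 18 * ‖a + b + c‖ ^ 2 - 27 ≤ 0 := by
  have ha0 : a ≠ 0 := by intro h; simp [h] at ha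
  have hb0 : b ≠ 0 := by intro h; simp [h] at hb
  have hc0 : c ≠ 0 := by intro h; simp [h] at hc
  have hca : (starRingEnd ℂ) a = b * c := by
    have h1 : a * (starRingEnd ℂ) a = 1 := by
      rw [Complex.mul_conj]
      norm_cast
      rw [← Complex.sq_norm, ha]; norm_num
    have h2 : a * (b * c) = 1 := by linear_combination habc
    exact mul_left_cancel₀ ha0 (h1.trans h2.symm)
  have hcb : (starRingEnd ℂ) b = c * a := by
    have h1 : b * (starRingEnd ℂ) b = 1 := by
      rw [Complex.mul_conj]
      norm_cast
      rw [← Complex.sq_norm, hb]; norm_num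
    have h2 : b * (c * a) = 1 := by linear_combination habc
    exact mul_left_cancel₀ hb0 (h1.trans h2.symm)
  have hcc : (starRingEnd ℂ) c = a * b := by
    have h1 : c * (starRingEnd ℂ) c = 1 := by
      rw [Complex.mul_conj]
      norm_cast
      rw [← Complex.sq_norm, hc]; norm_num
    have h2 : c * (a * b) = 1 := by linear_combination habc
    exact mul_left_cancel₀ hc0 (h1.trans h2.symm)
  set z := a + b + c with hz
  set w := a * b + b * c + c * a with hwdef
  have hw : (starRingEnd ℂ) z = w := by
    simp only [hz, map_add, hca, hcb, hcc, hwdef]; ring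
  set D := (a - b) * (b - c) * (c - a) with hD
  have hDconj : (starRingEnd ℂ) D = -D := by
    simp only [hD, map_mul, map_sub, hca, hcb, hcc]
    linear_combination (-(a - b) * (b - c) * (c - a)) * habc
  have hDre : D.re = 0 := by
    have := congrArg Complex.re hDconj
    simp [Complex.conj_re] at this
    linarith
  have key : (z * w) ^ 2 - 4 * z ^ 3 - 4 * w ^ 3 + 18 * (z * w) - 27 = D ^ 2 := by
    simp only [hz, hwdef, hD]
    linear_combination (4*(a+b+c)^3 - 18*(a+b+c)*(a*b+b*c+c*a) + 27*(1 + a*b*c)) * habc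
  have h1 : ‖z‖ ^ 2 = (z * w).re := by
    rw [← hw, Complex.mul_conj, ← Complex.sq_norm]
    norm_cast
  have h2 : ‖z‖ ^ 4 = ((z * w) ^ 2).re := by
    rw [← hw, Complex.mul_conj]
    norm_cast
    rw [← Complex.sq_norm]
    ring
  have h3 : (w ^ 3).re = (z ^ 3).re := by
    rw [← hw, ← map_pow, Complex.conj_re]
  have hgoal : ‖z‖ ^ 4 - 8 * ((z ^ 3).re) + 18 * ‖z‖ ^ 2 - 27
      = (D ^ 2).re := by
    rw [← key, h1, h2]
    simp only [Complex.sub_re, Complex.add_re, Complex.mul_re, Complex.ofReal_re]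
    simp [← h3]
    ring
  rw [hgoal]
  have hD2 : (D ^ 2).re = D.re ^ 2 - D.im ^ 2 := by
    rw [pow_two, Complex.mul_re]; ring
  rw [hD2, hDre]
  nlinarith [sq_nonneg D.im]
end

section
/- Let f(z) = |z|⁴ − 8·Re(z³) + 18·|z|² − 27. If z ∈ ℂ satisfies f(z) ≤ 0, then all roots of the polynomial X³ − zX² + conj(z)·X − 1 have modulus 1. -/
set_option maxHeartbeats 1000000 in
/-- If Goldman's function `f(z) = |z|⁴ - 8·Re(z³) + 18·|z|² - 27` satisfies `f(z) ≤ 0`,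
then all roots of `X³ - zX² + conj(z)·X - 1` have modulus 1. -/
theorem stmt15 (z : ℂ)
    (hf : ‖z‖ ^ 4 - 8 * ((z ^ 3).re) + 18 * ‖z‖ ^ 2 - 27 ≤ 0) :
    ∀ x : ℂ, x ^ 3 - z * x ^ 2 + (starRingEnd ℂ z) * x - 1 = 0 → ‖x‖ = 1 := by
  intro x hx
  by_contra habs
  set c : ℂ := (starRingEnd ℂ) x with hc
  have hx0 : x ≠ 0 := by
    rintro rfl
    simp at hx
  have hxc : x * c = (Complex.normSq x : ℂ) := by
    rw [hc, Complex.mul_conj]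
  have hn0 : Complex.normSq x ≠ 0 := (Complex.normSq_pos.mpr hx0).ne'
  have hn1 : Complex.normSq x ≠ 1 := by
    intro h
    apply habs
    have : ‖x‖ ^ 2 = 1 := by rw [Complex.sq_norm, h]
    nlinarith [norm_nonneg x]
  -- conjugate equation
  have E2 : c ^ 3 - (starRingEnd ℂ) z * c ^ 2 + z * c - 1 = 0 := by
    have := congrArg (starRingEnd ℂ) hx
    simpa [map_sub, map_add, map_mul, map_pow] using this
  -- solve for z and conj z
  have hu : z * (x * c * (1 - x * c)) = x + c ^ 2 - c ^ 2 * x ^ 3 - x * c ^ 3 := by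
    linear_combination c ^ 2 * hx + x * E2
  have hv : (starRingEnd ℂ) z * (x * c * (1 - x * c)) = c + x ^ 2 - x ^ 2 * c ^ 3 - c * x ^ 3 := by
    linear_combination c * hx + x ^ 2 * E2
  -- key identity
  have key : (z ^ 2 * ((starRingEnd ℂ) z) ^ 2 - 4 * z ^ 3 - 4 * ((starRingEnd ℂ) z) ^ 3
      + 18 * (z * (starRingEnd ℂ) z) - 27) * (x * c * (1 - x * c)) ^ 4
      = ((x ^ 2 - c) * (c ^ 2 - x)) ^ 2 * (1 - x * c) ^ 6 := by
    linear_combination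
      (((starRingEnd ℂ) z) ^ 2 * (x * c * (1 - x * c)) ^ 2
          * (z * (x * c * (1 - x * c)) + (x + c ^ 2 - c ^ 2 * x ^ 3 - x * c ^ 3))
        - 4 * (x * c * (1 - x * c)) * ((z * (x * c * (1 - x * c))) ^ 2
            + z * (x * c * (1 - x * c)) * (x + c ^ 2 - c ^ 2 * x ^ 3 - x * c ^ 3)
            + (x + c ^ 2 - c ^ 2 * x ^ 3 - x * c ^ 3) ^ 2)
        + 18 * (x * c * (1 - x * c)) ^ 2 * ((starRingEnd ℂ) z * (x * c * (1 - x * c)))) * hu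
      + ((x + c ^ 2 - c ^ 2 * x ^ 3 - x * c ^ 3) ^ 2
            * ((starRingEnd ℂ) z * (x * c * (1 - x * c)) + (c + x ^ 2 - x ^ 2 * c ^ 3 - c * x ^ 3))
          - 4 * (x * c * (1 - x * c)) * (((starRingEnd ℂ) z * (x * c * (1 - x * c))) ^ 2
              + (starRingEnd ℂ) z * (x * c * (1 - x * c)) * (c + x ^ 2 - x ^ 2 * c ^ 3 - c * x ^ 3)
              + (c + x ^ 2 - x ^ 2 * c ^ 3 - c * x ^ 3) ^ 2)
          + 18 * (x * c * (1 - x * c)) ^ 2 * (x + c ^ 2 - c ^ 2 * x ^ 3 - x * c ^ 3)) * hv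
  -- realify
  set T : ℂ := (x ^ 2 - c) * (c ^ 2 - x) with hT
  have hTconj : (starRingEnd ℂ) T = T := by
    simp only [hT, hc, map_mul, map_sub, map_pow, Complex.conj_conj]
    ring
  have hTre : T = (T.re : ℂ) := (Complex.conj_eq_iff_re.mp hTconj).symm
  have hT0 : T.re ≠ 0 := by
    intro h
    have hT0' : T = 0 := by rw [hTre, h]; simp
    have h0 : ‖x‖ ≠ 0 := norm_ne_zero_iff.mpr hx0
    rcases mul_eq_zero.mp hT0' with h' | h'
    · have h2 : x ^ 2 = c := by linear_combination h'
      have h3 : ‖x‖ ^ 2 = ‖x‖ := by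
        rw [← norm_pow, h2, hc, Complex.norm_conj]
      apply habs
      apply mul_left_cancel₀ h0
      rw [mul_one, ← sq]
      exact h3
    · have h2 : c ^ 2 = x := by linear_combination h'
      have habsc : ‖c‖ = ‖x‖ := by rw [hc, Complex.norm_conj]
      have h3 : ‖x‖ ^ 2 = ‖x‖ := by
        rw [← habsc, ← norm_pow, h2]
        exact habsc.symm
      apply habs
      apply mul_left_cancel₀ h0
      rw [mul_one, ← sq]
      exact h3
  -- rewrite F as real
  have hzc : z * (starRingEnd ℂ) z = ((‖z‖ ^ 2 : ℝ) : ℂ) := by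
    rw [Complex.mul_conj, Complex.sq_norm]
  have hz3 : z ^ 3 + ((starRingEnd ℂ) z) ^ 3 = ((2 * (z ^ 3).re : ℝ) : ℂ) := by
    rw [← map_pow, Complex.add_conj]
  set fr : ℝ := ‖z‖ ^ 4 - 8 * ((z ^ 3).re) + 18 * ‖z‖ ^ 2 - 27 with hfr
  have hFc : z ^ 2 * ((starRingEnd ℂ) z) ^ 2 - 4 * z ^ 3 - 4 * ((starRingEnd ℂ) z) ^ 3
      + 18 * (z * (starRingEnd ℂ) z) - 27 = (fr : ℂ) := by
    have h4 : z ^ 2 * ((starRingEnd ℂ) z) ^ 2 - 4 * z ^ 3 - 4 * ((starRingEnd ℂ) z) ^ 3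
        + 18 * (z * (starRingEnd ℂ) z) - 27
        = (z * (starRingEnd ℂ) z) ^ 2 - 4 * (z ^ 3 + ((starRingEnd ℂ) z) ^ 3)
          + 18 * (z * (starRingEnd ℂ) z) - 27 := by ring
    rw [h4, hzc, hz3, hfr]
    push_cast
    ring
  set n : ℝ := Complex.normSq x with hn
  have keyR : fr * (n * (1 - n)) ^ 4 = (T.re) ^ 2 * (1 - n) ^ 6 := by
    have hcast : ((fr * (n * (1 - n)) ^ 4 : ℝ) : ℂ) = (((T.re) ^ 2 * (1 - n) ^ 6 : ℝ) : ℂ) := by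
      push_cast
      rw [← hFc, ← hTre]
      rw [hxc] at key
      linear_combination key
    exact_mod_cast hcast
  have hnpos : 0 < n := Complex.normSq_pos.mpr hx0
  have h1n : (1 - n) ≠ 0 := fun h => hn1 (by rw [hn] at *; linarith)
  have hpos : 0 < (T.re) ^ 2 * (1 - n) ^ 6 := by positivity
  have hD4 : 0 < (n * (1 - n)) ^ 4 := by positivity
  nlinarith [mul_nonneg hD4.le (neg_nonneg.mpr hf)]
end

section
/- The trace map tr: SU(2,1) → ℂ is surjective: for every z ∈ ℂ there exists a matrix in SU(2,1) with trace z. (One can combine elliptic representatives diag(e^{ia}, e^{ib}, e^{ic}) with a+b+c = 0 for |arguments| achieving f(z) ≤ 0, and loxodromic representatives diag(λ, conj(λ)/λ, conj(λ)⁻¹) with 0 < |λ| < 1 for f(z) > 0.) -/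
open Matrix

/-- Auxiliary: an explicit `U(1,1)`-block matrix lies in `SU(2,1)` for the form
`diag(1,1,-1)`, with an explicitly computed trace. -/
theorem su21_aux (v w α β : ℂ) (hvw : v * w = 1) (hcv : (starRingEnd ℂ) v = w)
    (hcw : (starRingEnd ℂ) w = v) (hcβ : (starRingEnd ℂ) β = β)
    (hdet2 : α * ((starRingEnd ℂ) α) - β * β = 1) :
    (!![v^2, 0, 0; 0, w*α, w*β; 0, w*β, w*((starRingEnd ℂ) α)] : Matrix (Fin 3) (Fin 3) ℂ)ᴴ
        * (Matrix.diagonal ![1, 1, -1] : Matrix (Fin 3) (Fin 3) ℂ)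
        * !![v^2, 0, 0; 0, w*α, w*β; 0, w*β, w*((starRingEnd ℂ) α)] =
      Matrix.diagonal ![1, 1, -1] ∧
    (!![v^2, 0, 0; 0, w*α, w*β; 0, w*β, w*((starRingEnd ℂ) α)] : Matrix (Fin 3) (Fin 3) ℂ).det = 1 ∧
    (!![v^2, 0, 0; 0, w*α, w*β; 0, w*β, w*((starRingEnd ℂ) α)] : Matrix (Fin 3) (Fin 3) ℂ).trace
      = v^2 + w*α + w*((starRingEnd ℂ) α) := by
  have hccα : (starRingEnd ℂ) ((starRingEnd ℂ) α) = α := Complex.conj_conj α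
  refine ⟨?_, ?_, ?_⟩
  · ext i j
    fin_cases i <;> fin_cases j <;>
      simp [Matrix.mul_apply, Fin.sum_univ_three, Matrix.conjTranspose_apply,
        Matrix.diagonal, Matrix.vecHead, Matrix.vecTail, Function.comp,
        map_pow, _root_.map_mul, hcv, hcw, hcβ, hccα]
    · linear_combination (v*w+1)*hvw
    · linear_combination (α*((starRingEnd ℂ) α) - β*β)*hvw + hdet2
    · ring
    · ring
    · linear_combination (β*β - α*((starRingEnd ℂ) α))*hvw - hdet2
  · simp [Matrix.det_fin_three]
    linear_combination v^2*w^2*hdet2 + (v*w+1)*hvw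
  · simp [Matrix.trace_fin_three]

/-- The trace map `tr : SU(2,1) → ℂ` is surjective: for every `z ∈ ℂ` there is a matrix
of determinant 1 preserving the Hermitian form `diag(1,1,-1)` with trace `z`. -/
theorem stmt17 (z : ℂ) :
    ∃ M : Matrix (Fin 3) (Fin 3) ℂ,
      Mᴴ * (Matrix.diagonal ![1, 1, -1] : Matrix (Fin 3) (Fin 3) ℂ) * M =
        Matrix.diagonal ![1, 1, -1] ∧
      M.det = 1 ∧ Matrix.trace M = z := by
  -- Step 1: find θ such that z·e^{-iθ} - e^{-3iθ} is real (intermediate value theorem).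
  obtain ⟨θ, hθ⟩ : ∃ θ : ℝ,
      (z * Complex.exp (-(θ:ℂ) * Complex.I) - (Complex.exp (-(θ:ℂ) * Complex.I))^3).im = 0 := by
    set f : ℝ → ℝ := fun θ =>
      (z * Complex.exp (-(θ:ℂ) * Complex.I) - (Complex.exp (-(θ:ℂ) * Complex.I))^3).im with hf
    have hcont : Continuous f := by fun_prop
    have hflip : f Real.pi = - f 0 := by
      have h1 : Complex.exp (-(Real.pi:ℂ) * Complex.I) = -1 := by
        rw [show (-(Real.pi:ℂ) * Complex.I) = -(Real.pi * Complex.I) by ring,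
          Complex.exp_neg, Complex.exp_pi_mul_I]
        norm_num
      have h0 : Complex.exp (-(0:ℂ) * Complex.I) = 1 := by norm_num
      simp only [hf, Complex.ofReal_zero, h0, h1]
      ring_nf
      simp [Complex.sub_im, Complex.add_im, Complex.neg_im, Complex.one_im]
    rcases le_total (f 0) 0 with h0 | h0
    · have : (0:ℝ) ∈ Set.Icc (f 0) (f Real.pi) := ⟨h0, by rw [hflip]; linarith⟩
      obtain ⟨θ, _, hθ⟩ := intermediate_value_Icc Real.pi_pos.le hcont.continuousOn this
      exact ⟨θ, hθ⟩
    · have : (0:ℝ) ∈ Set.Icc (f Real.pi) (f 0) := ⟨by rw [hflip]; linarith, h0⟩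
      obtain ⟨θ, _, hθ⟩ := intermediate_value_Icc' Real.pi_pos.le hcont.continuousOn this
      exact ⟨θ, hθ⟩
  -- Step 2: set up the relevant unit complex numbers and the real parameter r.
  set v : ℂ := Complex.exp (-(θ:ℂ) * Complex.I) with hv
  set w : ℂ := Complex.exp ((θ:ℂ) * Complex.I) with hw
  have hvw : v * w = 1 := by
    rw [hv, hw, ← Complex.exp_add]; ring_nf; exact Complex.exp_zero
  have hcv : (starRingEnd ℂ) v = w := by
    rw [hv, hw, ← Complex.exp_conj]; congr 1
    simp [Complex.ext_iff]
  have hcw : (starRingEnd ℂ) w = v := by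
    rw [hv, hw, ← Complex.exp_conj]; congr 1
    simp [Complex.ext_iff]
  set r : ℝ := (z * v - v^3).re with hr
  have hrc : z * v - v^3 = (r:ℂ) := by
    rw [Complex.ext_iff]
    constructor
    · simp [hr]
    · simp [hθ]
  have hz : z = (r:ℂ) * w + v ^ 2 := by
    have h2 := congrArg (· * w) hrc
    calc z = (z * v - v^3) * w + v^3 * w - z * (v*w) + z := by ring
    _ = (r:ℂ) * w + v^2 * (v*w) - z * (v*w) + z := by rw [h2]; ring
    _ = (r:ℂ) * w + v^2 := by rw [hvw]; ring
  -- Step 3: build the U(1,1) block with trace r·w.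
  set α : ℂ := ((r/2 : ℝ):ℂ) + Complex.I with hα
  set β : ℂ := ((r/2 : ℝ) : ℂ) with hβ
  have hcβ : (starRingEnd ℂ) β = β := by rw [hβ]; exact Complex.conj_ofReal _
  have hcα : (starRingEnd ℂ) α = β - Complex.I := by
    rw [hα, hβ, map_add, Complex.conj_ofReal, Complex.conj_I]
    ring
  have hdet2 : α * ((starRingEnd ℂ) α) - β * β = 1 := by
    rw [hcα, hα, hβ]
    ring_nf
    rw [Complex.I_sq]
    ring
  obtain ⟨hform, hdet, htrace⟩ := su21_aux v w α β hvw hcv hcw hcβ hdet2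
  refine ⟨_, hform, hdet, ?_⟩
  rw [htrace, hz, hcα, hα, hβ]
  push_cast
  ring
end
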